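/- Lemma 1 (multivariate stochastic representation of the skew-normal): let λ ∈ ℝⁿ and δ = λ/√(1 + λᵀλ). Then I − δ·δᵀ is positive semidefinite with positive determinant, and if X₀ is a standard normal real random variable independent of an ℝⁿ-valued random vector X₁ whose components are i.i.d. standard normal, then W = |X₀|·δ + (I − δ·δᵀ)^{1/2}·X₁ has law absolutely continuous with respect to Lebesgue measure on ℝⁿ, with density w ↦ 2·φₙ(w; 0, I)·Φ(λᵀw). -/

import Mathlib

open MeasureTheory ProbabilityTheory Real Matrix Set

/-- The standard normal distribution function `Φ(x) = ∫_{-∞}^x (2π)^{-1/2} exp(-u²/2) du`. -/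
noncomputable def stdNormalCDF (x : ℝ) : ℝ :=
  ∫ u in Set.Iic x, (2 * π) ^ (-(1 : ℝ) / 2) * Real.exp (-u ^ 2 / 2)

/-- The `n`-dimensional normal density with mean `m` and positive definite covariance `V`:
`φₙ(y; m, V) = (2π)^{-n/2} (det V)^{-1/2} exp(-½ (y−m)ᵀ V⁻¹ (y−m))`. -/
noncomputable def mvNormalPDF {n : ℕ} (m : Fin n → ℝ) (V : Matrix (Fin n) (Fin n) ℝ)
    (y : Fin n → ℝ) : ℝ :=
  (2 * π) ^ (-(n : ℝ) / 2) * V.det ^ (-(1 : ℝ) / 2) *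
    Real.exp (-(1 / 2) * ((y - m) ⬝ᵥ (V⁻¹ *ᵥ (y - m))))

private lemma my_integral_Ioi_sub (g : ℝ → ℝ) (a b : ℝ) :
    ∫ x in Ioi a, g (x - b) = ∫ x in Ioi (a - b), g x := by
  calc ∫ x in Ioi a, g (x - b)
      = ∫ x, (Ioi a).indicator (fun y => g (y - b)) x := (integral_indicator measurableSet_Ioi).symm
    _ = ∫ x, (Ioi a).indicator (fun y => g (y - b)) (x + b) :=
        (integral_add_right_eq_self _ b).symm
    _ = ∫ x, (Ioi (a - b)).indicator g x := by
        congr 1; ext x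
        by_cases h : a - b < x
        · rw [Set.indicator_of_mem (by simpa using (by linarith : a < x + b)),
            Set.indicator_of_mem (Set.mem_Ioi.mpr h), add_sub_cancel_right]
        · rw [Set.indicator_of_notMem (by simp only [Set.mem_Ioi]; intro hc; exact h (by linarith)),
            Set.indicator_of_notMem (by simpa using h)]
    _ = ∫ x in Ioi (a - b), g x := integral_indicator measurableSet_Ioi

private lemma my_integrable_exp_sq_abs (c a : ℝ) (hc : 0 < c) :
    Integrable (fun t : ℝ => Real.exp (-(c * |t| - a) ^ 2 / 2)) := by
  have hbase : Integrable (fun t : ℝ => Real.exp (a ^ 2 / 2) * Real.exp (-(c ^ 2 / 4) * t ^ 2)) :=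
    (integrable_exp_neg_mul_sq (by positivity)).const_mul _
  refine hbase.mono' ?_ (ae_of_all _ fun t => ?_)
  · apply Continuous.aestronglyMeasurable
    fun_prop
  · rw [Real.norm_eq_abs, abs_of_nonneg (Real.exp_nonneg _), ← Real.exp_add]
    apply Real.exp_le_exp.2
    have h1 : (c * |t|) ^ 2 = c ^ 2 * t ^ 2 := by rw [mul_pow, sq_abs]
    nlinarith [sq_nonneg (c * |t| - 2 * a)]

private lemma my_key1d (c a : ℝ) (hc : 0 < c) :
    ∫ t : ℝ, Real.exp (-(c * |t| - a) ^ 2 / 2)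
      = 2 * c⁻¹ * ∫ u in Iic a, Real.exp (-u ^ 2 / 2) := by
  have h1 : ∫ t : ℝ, Real.exp (-(c * |t| - a) ^ 2 / 2)
      = 2 * ∫ t in Ioi (0:ℝ), Real.exp (-(c * t - a) ^ 2 / 2) :=
    integral_comp_abs (f := fun t => Real.exp (-(c * t - a) ^ 2 / 2))
  have h2 : ∫ t in Ioi (0:ℝ), Real.exp (-(c * t - a) ^ 2 / 2)
      = c⁻¹ * ∫ u in Ioi (0:ℝ), Real.exp (-(u - a) ^ 2 / 2) := by
    have := integral_comp_mul_left_Ioi (fun u => Real.exp (-(u - a) ^ 2 / 2)) 0 hc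
    simp only [mul_zero, smul_eq_mul] at this
    exact this
  have h3 : ∫ u in Ioi (0:ℝ), Real.exp (-(u - a) ^ 2 / 2)
      = ∫ u in Ioi (-a), Real.exp (-u ^ 2 / 2) := by
    simpa using my_integral_Ioi_sub (fun u => Real.exp (-u ^ 2 / 2)) 0 a
  have h4 : ∫ u in Ioi (-a), Real.exp (-u ^ 2 / 2)
      = ∫ u in Iic a, Real.exp (-u ^ 2 / 2) := by
    rw [← integral_comp_neg_Iic]
    congr 1; ext u; rw [neg_sq]
  rw [h1, h2, h3, h4]; ring

private lemma my_sqrt_pow (nn : ℕ) : ((Real.sqrt (2 * π))⁻¹) ^ nn = (2 * π) ^ (-(nn : ℝ) / 2) := by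
  have h2π : (0:ℝ) < 2 * π := by positivity
  rw [Real.sqrt_eq_rpow, ← Real.rpow_neg_one ((2 * π) ^ ((1:ℝ)/2)), ← Real.rpow_natCast _ nn,
    ← Real.rpow_mul h2π.le, ← Real.rpow_mul h2π.le]
  congr 1
  ring

private lemma my_cdf_eq (a : ℝ) :
    stdNormalCDF a = (Real.sqrt (2 * π))⁻¹ * ∫ u in Iic a, Real.exp (-u ^ 2 / 2) := by
  rw [stdNormalCDF, integral_const_mul]
  congr 1
  have := my_sqrt_pow 1
  simpa using this.symm

private lemma my_key_scalar (nn : ℕ) (c a WW : ℝ) (hc : 0 < c) (q : ℝ → ℝ)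
    (hq : ∀ t, q t + t ^ 2 = (c * |t| - a) ^ 2 + WW) :
    ∫⁻ t : ℝ, ENNReal.ofReal ((Real.sqrt (2 * π))⁻¹ * Real.exp (-t ^ 2 / 2)) *
        (ENNReal.ofReal c *
          ENNReal.ofReal (((Real.sqrt (2 * π))⁻¹) ^ nn * Real.exp (-(q t) / 2)))
      = ENNReal.ofReal (2 * ((2 * π) ^ (-(nn : ℝ) / 2) * Real.exp (-(1/2) * WW))
          * stdNormalCDF a) := by
  set K := ((Real.sqrt (2 * π))⁻¹) ^ (nn + 1) * c * Real.exp (-WW / 2) with hK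
  have hKnn : 0 ≤ K := by positivity
  have hintg : ∀ t : ℝ,
      ENNReal.ofReal ((Real.sqrt (2 * π))⁻¹ * Real.exp (-t ^ 2 / 2)) *
        (ENNReal.ofReal c *
          ENNReal.ofReal (((Real.sqrt (2 * π))⁻¹) ^ nn * Real.exp (-(q t) / 2)))
      = ENNReal.ofReal (K * Real.exp (-(c * |t| - a) ^ 2 / 2)) := by
    intro t
    rw [← ENNReal.ofReal_mul (by positivity), ← ENNReal.ofReal_mul (by positivity)]
    congr 1
    have hqt : q t = (c * |t| - a) ^ 2 + WW - t ^ 2 := by linarith [hq t]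
    rw [hqt]
    have e1 : Real.exp (-t ^ 2 / 2) * Real.exp (-((c * |t| - a) ^ 2 + WW - t ^ 2) / 2)
        = Real.exp (-(c * |t| - a) ^ 2 / 2) * Real.exp (-WW / 2) := by
      rw [← Real.exp_add, ← Real.exp_add]
      congr 1
      ring
    calc (Real.sqrt (2 * π))⁻¹ * Real.exp (-t ^ 2 / 2) *
          (c * (((Real.sqrt (2 * π))⁻¹) ^ nn * Real.exp (-((c * |t| - a) ^ 2 + WW - t ^ 2) / 2)))
        = (((Real.sqrt (2 * π))⁻¹) ^ nn * (Real.sqrt (2 * π))⁻¹ * c) *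
            (Real.exp (-t ^ 2 / 2) * Real.exp (-((c * |t| - a) ^ 2 + WW - t ^ 2) / 2)) := by
          ring
      _ = K * Real.exp (-(c * |t| - a) ^ 2 / 2) := by
          rw [e1, hK, pow_succ]; ring
  simp_rw [hintg]
  rw [← ofReal_integral_eq_lintegral_ofReal
      ((my_integrable_exp_sq_abs c a hc).const_mul K)
      (ae_of_all _ fun t => by positivity)]
  congr 1
  rw [integral_const_mul, my_key1d c a hc, my_cdf_eq, hK, pow_succ, ← my_sqrt_pow nn]
  have hcne : c ≠ 0 := hc.ne'
  field_simp

private lemma my_lintegral_pi_fin {n : ℕ} (f : Fin n → ℝ → ENNReal) (hf : ∀ i, Measurable (f i)) :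
    ∫⁻ x, ∏ i, f i (x i) ∂(Measure.pi fun _ : Fin n => (volume : Measure ℝ)) =
      ∏ i, ∫⁻ y, f i y := by
  induction n with
  | zero =>
      rw [Measure.pi_of_empty]
      simp
  | succ n ih =>
      have hmp := measurePreserving_piFinSuccAbove (fun _ : Fin (n + 1) => (volume : Measure ℝ)) 0
      set e := MeasurableEquiv.piFinSuccAbove (fun _ : Fin (n + 1) => ℝ) 0 with he
      have hF2 : Measurable fun p : ℝ × (Fin n → ℝ) =>
          f 0 p.1 * ∏ j, f (Fin.succ j) (p.2 j) := by
        refine ((hf 0).comp measurable_fst).mul ?_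
        exact Finset.measurable_prod _ fun j _ =>
          (hf _).comp ((measurable_pi_apply j).comp measurable_snd)
      have key : ∫⁻ x, ∏ i, f i (x i) ∂(Measure.pi fun _ : Fin (n + 1) => (volume : Measure ℝ))
          = ∫⁻ p, f 0 p.1 * ∏ j, f (Fin.succ j) (p.2 j)
              ∂((volume : Measure ℝ).prod (Measure.pi fun _ : Fin n => (volume : Measure ℝ))) := by
        rw [← hmp.lintegral_comp hF2]
        congr 1
        ext x
        have : ∏ i, f i (x i) = f 0 (x 0) * ∏ j, f (Fin.succ j) (x (Fin.succ j)) :=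
          Fin.prod_univ_succ _
        rw [this]
        rfl
      rw [key]
      have hsplit := lintegral_prod_mul (μ := (volume : Measure ℝ))
        (ν := Measure.pi fun _ : Fin n => (volume : Measure ℝ))
        (f := fun t => f 0 t) (g := fun y => ∏ j, f (Fin.succ j) (y j))
        ((hf 0).aemeasurable)
        (Finset.measurable_prod _ fun j _ => (hf _).comp (measurable_pi_apply j)).aemeasurable
      rw [hsplit, ih (fun j => f (Fin.succ j)) (fun j => hf _), Fin.prod_univ_succ]

private lemma my_gaussianPDF_meas : Measurable (gaussianPDF 0 1) := by
  rw [gaussianPDF_def]; exact (measurable_gaussianPDFReal 0 1).ennreal_ofReal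

private noncomputable def myPhi (n : ℕ) : (Fin n → ℝ) → ENNReal :=
  fun x => ∏ i, gaussianPDF 0 1 (x i)

private lemma myPhi_meas (n : ℕ) : Measurable (myPhi n) :=
  Finset.measurable_prod _ fun i _ => my_gaussianPDF_meas.comp (measurable_pi_apply i)

private lemma my_pi_gauss (n : ℕ) :
    (Measure.pi fun _ : Fin n => gaussianReal 0 1) =
      (volume : Measure (Fin n → ℝ)).withDensity (myPhi n) := by
  refine Measure.pi_eq fun s hs => ?_
  rw [withDensity_apply _ (MeasurableSet.univ_pi hs), ← lintegral_indicator (MeasurableSet.univ_pi hs)]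
  have hind : ∀ x : Fin n → ℝ,
      (univ.pi s).indicator (myPhi n) x
        = ∏ i, (s i).indicator (gaussianPDF 0 1) (x i) := by
    intro x
    by_cases h : x ∈ univ.pi s
    · rw [Set.indicator_of_mem h]
      exact Finset.prod_congr rfl fun i _ =>
        (Set.indicator_of_mem (h i trivial) _).symm
    · rw [Set.indicator_of_notMem h]
      obtain ⟨i, hi⟩ : ∃ i, x i ∉ s i := by simpa [Set.mem_pi] using h
      exact (Finset.prod_eq_zero (Finset.mem_univ i)
        (by rw [Set.indicator_of_notMem hi])).symm
  simp_rw [hind]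
  rw [MeasureTheory.volume_pi, my_lintegral_pi_fin
    (fun i => (s i).indicator (gaussianPDF 0 1)) (fun i => my_gaussianPDF_meas.indicator (hs i))]
  refine Finset.prod_congr rfl fun i _ => ?_
  rw [gaussianReal_apply 0 one_ne_zero (s i), ← lintegral_indicator (hs i)]

private lemma my_gaussianPDF_eq (t : ℝ) :
    gaussianPDF 0 1 t = ENNReal.ofReal ((Real.sqrt (2 * π))⁻¹ * Real.exp (-t ^ 2 / 2)) := by
  rw [gaussianPDF_def]
  congr 1
  unfold gaussianPDFReal
  norm_num

private lemma myPhi_eq {n : ℕ} (y : Fin n → ℝ) :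
    myPhi n y = ENNReal.ofReal (((Real.sqrt (2 * π))⁻¹) ^ n * Real.exp (-(y ⬝ᵥ y) / 2)) := by
  unfold myPhi
  simp_rw [my_gaussianPDF_eq]
  rw [← ENNReal.ofReal_prod_of_nonneg (fun i _ => by positivity)]
  congr 1
  rw [Finset.prod_mul_distrib, Finset.prod_const, Finset.card_univ, Fintype.card_fin,
    ← Real.exp_sum]
  congr 1
  rw [dotProduct, ← Finset.sum_div, ← Finset.sum_neg_distrib]
  simp [pow_two]

private lemma my_vecMulVec_mulVec {n : ℕ} (a b x : Fin n → ℝ) :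
    vecMulVec a b *ᵥ x = (b ⬝ᵥ x) • a := by
  ext i
  simp only [mulVec, dotProduct, vecMulVec_apply, Pi.smul_apply, smul_eq_mul, Finset.sum_mul]
  exact Finset.sum_congr rfl fun j _ => by ring

private lemma my_step_lin {n : ℕ} (S : Matrix (Fin n) (Fin n) ℝ) (hd : S.det ≠ 0)
    (h : (Fin n → ℝ) → ENNReal) (hh : Measurable h) :
    ∫⁻ x, h (S *ᵥ x) = ENNReal.ofReal |S.det|⁻¹ * ∫⁻ y, h y := by
  have hmap := Real.map_matrix_volume_pi_eq_smul_volume_pi hd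
  have hlin : Measurable fun x : Fin n → ℝ => Matrix.toLin' S x :=
    (LinearMap.continuous_on_pi _).measurable
  calc ∫⁻ x, h (S *ᵥ x) = ∫⁻ x, h (Matrix.toLin' S x) := by simp_rw [Matrix.toLin'_apply]
    _ = ∫⁻ y, h y ∂(Measure.map (Matrix.toLin' S) volume) := (lintegral_map hh hlin).symm
    _ = ENNReal.ofReal |S.det|⁻¹ * ∫⁻ y, h y := by
        rw [hmap, lintegral_smul_measure, abs_inv, smul_eq_mul]

private lemma my_mulVec_meas {n : ℕ} (M : Matrix (Fin n) (Fin n) ℝ) :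
    Measurable fun y : Fin n → ℝ => M *ᵥ y := by
  have h := (LinearMap.continuous_on_pi (Matrix.mulVecLin M)).measurable
  simpa [Matrix.mulVecLin_apply, Matrix.coe_mulVecLin] using h

set_option maxHeartbeats 2000000 in
/-- Lemma 1 (multivariate stochastic representation of the skew-normal) -/
theorem mv_skewNormal_stochastic_representation {n : ℕ}
    {Ω : Type*} [MeasurableSpace Ω] (P : Measure Ω) [IsProbabilityMeasure P]
    (lam δ : Fin n → ℝ) (hδ : δ = (Real.sqrt (1 + lam ⬝ᵥ lam))⁻¹ • lam)
    (S : Matrix (Fin n) (Fin n) ℝ) (hS : S.PosSemidef)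
    (hSsq : S * S = 1 - vecMulVec δ δ)
    (X₀ : Ω → ℝ) (X₁ : Ω → (Fin n → ℝ)) (hX₀ : Measurable X₀) (hX₁ : Measurable X₁)
    (hindep : IndepFun X₀ X₁ P)
    (hlaw₀ : Measure.map X₀ P = gaussianReal 0 1)
    (hlaw₁ : Measure.map X₁ P = Measure.pi fun _ : Fin n => gaussianReal 0 1) :
    ((1 : Matrix (Fin n) (Fin n) ℝ) - vecMulVec δ δ).PosSemidef ∧
    0 < ((1 : Matrix (Fin n) (Fin n) ℝ) - vecMulVec δ δ).det ∧
    Measure.map (fun ω => |X₀ ω| • δ + S *ᵥ X₁ ω) P =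
      volume.withDensity (fun w =>
        ENNReal.ofReal (2 * mvNormalPDF 0 1 w * stdNormalCDF (lam ⬝ᵥ w))) := by
  classical
  -- scalars
  have hL : (0:ℝ) ≤ lam ⬝ᵥ lam :=
    Finset.sum_nonneg fun i _ => mul_self_nonneg (lam i)
  set L := lam ⬝ᵥ lam with hLdef
  have h1L : (0:ℝ) < 1 + L := by linarith
  set c := Real.sqrt (1 + L) with hcdef
  have hc : 0 < c := Real.sqrt_pos.mpr h1L
  have hc2 : c ^ 2 = 1 + L := Real.sq_sqrt h1L.le
  have hcc : c⁻¹ * c⁻¹ = (1 + L)⁻¹ := by rw [← mul_inv, ← sq, hc2]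
  have hδδ : δ ⬝ᵥ δ = (1 + L)⁻¹ * L := by
    rw [hδ, smul_dotProduct, dotProduct_smul, smul_eq_mul, smul_eq_mul, ← hLdef, ← mul_assoc, hcc]
  -- Cauchy-Schwarz
  have hCS : ∀ x : Fin n → ℝ, (δ ⬝ᵥ x) ^ 2 ≤ (δ ⬝ᵥ δ) * (x ⬝ᵥ x) := by
    intro x
    have := Finset.sum_mul_sq_le_sq_mul_sq Finset.univ δ x
    simpa [dotProduct, pow_two] using this
  -- positive definiteness
  have hherm : ((1 : Matrix (Fin n) (Fin n) ℝ) - vecMulVec δ δ).IsHermitian := by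
    have h2 : (vecMulVec δ δ).IsHermitian := by
      ext i j
      simp [conjTranspose_apply, vecMulVec_apply, mul_comm]
    exact Matrix.isHermitian_one.sub h2
  have hpos : ∀ x : Fin n → ℝ, x ≠ 0 →
      0 < star x ⬝ᵥ (((1 : Matrix (Fin n) (Fin n) ℝ) - vecMulVec δ δ) *ᵥ x) := by
    intro x hx
    have hsx : star x = x := by simp
    have hxx : 0 < x ⬝ᵥ x := by
      obtain ⟨i, hi⟩ := Function.ne_iff.mp hx
      exact Finset.sum_pos' (fun j _ => mul_self_nonneg (x j))
        ⟨i, Finset.mem_univ i, mul_self_pos.mpr hi⟩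
    have hmv : ((1 : Matrix (Fin n) (Fin n) ℝ) - vecMulVec δ δ) *ᵥ x = x - (δ ⬝ᵥ x) • δ := by
      rw [sub_mulVec, one_mulVec, my_vecMulVec_mulVec]
    rw [hsx, hmv, dotProduct_sub, dotProduct_smul, smul_eq_mul, dotProduct_comm x δ]
    have h1 : (δ ⬝ᵥ x) ^ 2 ≤ ((1+L)⁻¹ * L) * (x ⬝ᵥ x) := hδδ ▸ hCS x
    have h2 : (1+L)⁻¹ * L < 1 := by
      rw [mul_comm, ← div_eq_mul_inv, div_lt_one h1L]; linarith
    nlinarith [sq_nonneg (δ ⬝ᵥ x)]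
  have hSigpd : ((1 : Matrix (Fin n) (Fin n) ℝ) - vecMulVec δ δ).PosDef := Matrix.PosDef.of_dotProduct_mulVec_pos hherm hpos
  -- determinant of Σ
  have hneg : vecMulVec (-δ) δ = - vecMulVec δ δ := by
    ext i j; simp [vecMulVec_apply]
  have hSigdet1 : ((1 : Matrix (Fin n) (Fin n) ℝ) - vecMulVec δ δ).det = 1 - δ ⬝ᵥ δ := by
    rw [sub_eq_add_neg, ← hneg, Matrix.vecMulVec_eq Unit, Matrix.det_one_add_replicateCol_mul_replicateRow]
    simp [sub_eq_add_neg]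
  have hSigdetval : ((1 : Matrix (Fin n) (Fin n) ℝ) - vecMulVec δ δ).det = (1 + L)⁻¹ := by
    rw [hSigdet1, hδδ]
    field_simp
    ring
  have hdetpos : 0 < ((1 : Matrix (Fin n) (Fin n) ℝ) - vecMulVec δ δ).det := by
    rw [hSigdetval]; positivity
  refine ⟨hSigpd.posSemidef, hdetpos, ?_⟩
  -- matrix algebra for Σ⁻¹ and S
  set Lm := vecMulVec lam lam with hLm
  have hD : vecMulVec δ δ = (1 + L)⁻¹ • Lm := by
    ext i j
    rw [hδ]
    simp only [vecMulVec_apply, Pi.smul_apply, smul_eq_mul, Matrix.smul_apply, hLm]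
    calc c⁻¹ * lam i * (c⁻¹ * lam j) = (c⁻¹ * c⁻¹) * (lam i * lam j) := by ring
      _ = (1+L)⁻¹ * (lam i * lam j) := by rw [hcc]
  have hLmLm : Lm * Lm = L • Lm := by
    ext i j
    simp only [hLm, Matrix.mul_apply, vecMulVec_apply, Matrix.smul_apply, smul_eq_mul, hLdef,
      dotProduct]
    rw [Finset.sum_mul]
    exact Finset.sum_congr rfl fun k _ => by ring
  have hSiginv : ((1 : Matrix (Fin n) (Fin n) ℝ) - vecMulVec δ δ)⁻¹ = 1 + Lm := by
    apply Matrix.inv_eq_right_inv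
    rw [hD, sub_mul, one_mul, Matrix.smul_mul, mul_add, mul_one, hLmLm, smul_add, smul_smul,
      ← add_smul]
    have hco : (1+L)⁻¹ + (1+L)⁻¹ * L = 1 := by field_simp
    rw [hco, one_smul]
    exact add_sub_cancel_right 1 Lm
  have hSsym : Sᵀ = S := by
    have h := hS.1
    conv_rhs => rw [← h]
    ext i j
    simp [Matrix.conjTranspose_apply, Matrix.transpose_apply]
  have hdet2 : S.det * S.det = (1 + L)⁻¹ := by
    rw [← Matrix.det_mul, hSsq, hSigdetval]
  have hdetS_nonneg : 0 ≤ S.det := by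
    exact hS.det_nonneg
  have hdetS : S.det = c⁻¹ := by
    have h1 : S.det = Real.sqrt (S.det * S.det) := (Real.sqrt_mul_self hdetS_nonneg).symm
    rw [h1, hdet2, hcdef, ← Real.sqrt_inv]
  have hdetS_ne : S.det ≠ 0 := by
    rw [hdetS]; exact inv_ne_zero hc.ne'
  have hSS : ∀ x : Fin n → ℝ, S⁻¹ *ᵥ (S *ᵥ x) = x := by
    intro x
    rw [Matrix.mulVec_mulVec, Matrix.nonsing_inv_mul S hdetS_ne.isUnit, Matrix.one_mulVec]
  have hSinvsq : S⁻¹ * S⁻¹ = 1 + Lm := by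
    rw [← Matrix.mul_inv_rev, hSsq, hSiginv]
  have hSinvsym : S⁻¹ᵀ = S⁻¹ := by rw [Matrix.transpose_nonsing_inv, hSsym]
  -- quadratic identity
  have hlamδ : lam ⬝ᵥ δ = c⁻¹ * L := by
    rw [hδ, dotProduct_smul, smul_eq_mul, ← hLdef]
  have hquad : ∀ (u : ℝ) (w : Fin n → ℝ),
      (S⁻¹ *ᵥ (w - u • δ)) ⬝ᵥ (S⁻¹ *ᵥ (w - u • δ)) + u ^ 2
        = (c * u - lam ⬝ᵥ w) ^ 2 + w ⬝ᵥ w := by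
    intro u w
    set v := w - u • δ with hv
    have hdot : (S⁻¹ *ᵥ v) ⬝ᵥ (S⁻¹ *ᵥ v) = v ⬝ᵥ v + (lam ⬝ᵥ v) ^ 2 := by
      calc (S⁻¹ *ᵥ v) ⬝ᵥ (S⁻¹ *ᵥ v)
          = ((S⁻¹ *ᵥ v) ᵥ* S⁻¹) ⬝ᵥ v := Matrix.dotProduct_mulVec _ _ _
        _ = (S⁻¹ *ᵥ (S⁻¹ *ᵥ v)) ⬝ᵥ v := by
            rw [← Matrix.mulVec_transpose, hSinvsym]
        _ = (((S⁻¹ * S⁻¹) *ᵥ v)) ⬝ᵥ v := by rw [Matrix.mulVec_mulVec]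
        _ = ((1 + Lm) *ᵥ v) ⬝ᵥ v := by rw [hSinvsq]
        _ = v ⬝ᵥ v + (lam ⬝ᵥ v) ^ 2 := by
            rw [Matrix.add_mulVec, Matrix.one_mulVec, hLm, my_vecMulVec_mulVec,
              add_dotProduct, smul_dotProduct, smul_eq_mul, dotProduct_comm lam v, sq]
    have hvv : v ⬝ᵥ v = w ⬝ᵥ w - 2 * u * (c⁻¹ * (lam ⬝ᵥ w)) + u ^ 2 * ((1+L)⁻¹ * L) := by
      rw [hv]
      rw [dotProduct_sub, sub_dotProduct, sub_dotProduct, dotProduct_smul, smul_dotProduct,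
        smul_dotProduct, dotProduct_smul, smul_eq_mul, smul_eq_mul, smul_eq_mul, smul_eq_mul,
        dotProduct_comm w δ, hδδ]
      have hδw : δ ⬝ᵥ w = c⁻¹ * (lam ⬝ᵥ w) := by
        rw [hδ, smul_dotProduct, smul_eq_mul]
      rw [hδw]
      ring
    have hlv : lam ⬝ᵥ v = lam ⬝ᵥ w - u * (c⁻¹ * L) := by
      rw [hv, dotProduct_sub, dotProduct_smul, smul_eq_mul, hlamδ]
    rw [hdot, hvv, hlv]
    have hLc : L = c ^ 2 - 1 := by linarith
    rw [hLc]
    have h1c : 1 + (c ^ 2 - 1) = c ^ 2 := by ring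
    rw [h1c]
    field_simp
    ring
  -- measure-theoretic part
  set g : ℝ × (Fin n → ℝ) → (Fin n → ℝ) := fun p => |p.1| • δ + S *ᵥ p.2 with hgdef
  have hgcont : Continuous g := by
    apply Continuous.add
    · exact (continuous_abs.comp continuous_fst).smul continuous_const
    · have h2 : Continuous fun x : Fin n → ℝ => S *ᵥ x := by
        have h := LinearMap.continuous_on_pi (Matrix.mulVecLin S)
        simpa [Matrix.mulVecLin_apply, Matrix.coe_mulVecLin] using h
      exact h2.comp continuous_snd
  have hgmeas : Measurable g := hgcont.measurable
  have hjoint : Measure.map (fun ω => (X₀ ω, X₁ ω)) P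
      = (gaussianReal 0 1).prod (Measure.pi fun _ : Fin n => gaussianReal 0 1) := by
    rw [← hlaw₁, ← hlaw₀]
    exact (indepFun_iff_map_prod_eq_prod_map_map hX₀.aemeasurable hX₁.aemeasurable).mp hindep
  have hWmap : Measure.map (fun ω => |X₀ ω| • δ + S *ᵥ X₁ ω) P
      = Measure.map g ((gaussianReal 0 1).prod (Measure.pi fun _ : Fin n => gaussianReal 0 1)) := by
    rw [← hjoint, Measure.map_map hgmeas (hX₀.prodMk hX₁)]
    rfl
  rw [hWmap]
  refine Measure.ext fun s hs => ?_
  set F : (Fin n → ℝ) → ENNReal := s.indicator fun _ => 1 with hF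
  have hFmeas : Measurable F := measurable_const.indicator hs
  have hFle : ∀ w, F w ≤ 1 := by
    intro w; by_cases h : w ∈ s <;> simp [hF, Set.indicator_apply, h]
  have hFne : ∀ w, F w ≠ ⊤ := fun w => ((hFle w).trans_lt ENNReal.one_lt_top).ne
  rw [Measure.map_apply hgmeas hs, ← lintegral_indicator_one (hgmeas hs)]
  have hcomp : ∀ p : ℝ × (Fin n → ℝ),
      (g ⁻¹' s).indicator (1 : (ℝ × (Fin n → ℝ)) → ENNReal) p = F (g p) := by
    intro p
    by_cases h : g p ∈ s <;>
      simp [hF, Set.indicator_apply, h, Set.mem_preimage]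
  simp_rw [hcomp]
  rw [lintegral_prod (fun p => F (g p)) ((hFmeas.comp hgmeas).aemeasurable)]
  -- inner integral transformation
  have hinner : ∀ t : ℝ,
      (∫⁻ x, F (g (t, x)) ∂(Measure.pi fun _ : Fin n => gaussianReal 0 1))
        = ENNReal.ofReal c * ∫⁻ w', myPhi n (S⁻¹ *ᵥ (w' - |t| • δ)) * F w' := by
    intro t
    rw [my_pi_gauss n, lintegral_withDensity_eq_lintegral_mul _ (myPhi_meas n)
      (g := fun x => F (g (t, x)))
      (by exact hFmeas.comp (hgmeas.comp measurable_prodMk_left))]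
    have h1 : ∀ x, (myPhi n * fun x => F (g (t, x))) x
        = (fun y => myPhi n (S⁻¹ *ᵥ y) * F (|t| • δ + y)) (S *ᵥ x) := by
      intro x
      simp only [Pi.mul_apply, hSS x, hgdef]
    simp_rw [h1]
    have hmeas_h : Measurable fun y : Fin n → ℝ => myPhi n (S⁻¹ *ᵥ y) * F (|t| • δ + y) := by
      apply Measurable.mul
      · exact (myPhi_meas n).comp (my_mulVec_meas S⁻¹)
      · exact hFmeas.comp (measurable_const_add _)
    rw [my_step_lin S hdetS_ne (fun y => myPhi n (S⁻¹ *ᵥ y) * F (|t| • δ + y)) hmeas_h]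
    have hr : ENNReal.ofReal |S.det|⁻¹ = ENNReal.ofReal c := by
      rw [hdetS, abs_of_pos (inv_pos.mpr hc), inv_inv]
    rw [hr]
    congr 1
    have htr := lintegral_add_left_eq_self (μ := (volume : Measure (Fin n → ℝ)))
      (fun w' => myPhi n (S⁻¹ *ᵥ (w' - |t| • δ)) * F w') (|t| • δ)
    rw [← htr]
    congr 1
    ext y
    rw [add_sub_cancel_left]
  rw [lintegral_congr hinner]
  -- outer integral: gaussian density
  have hH : Measurable fun p : ℝ × (Fin n → ℝ) => myPhi n (S⁻¹ *ᵥ (p.2 - |p.1| • δ)) * F p.2 := by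
    refine Measurable.mul ?_ (hFmeas.comp measurable_snd)
    refine (myPhi_meas n).comp ?_
    refine (my_mulVec_meas S⁻¹).comp ?_
    exact measurable_snd.sub ((measurable_fst.abs).smul measurable_const)
  have hJmeas : Measurable fun t : ℝ => ∫⁻ w', myPhi n (S⁻¹ *ᵥ (w' - |t| • δ)) * F w' := by
    exact Measurable.lintegral_prod_right' hH
  rw [gaussianReal_of_var_ne_zero 0 one_ne_zero,
    lintegral_withDensity_eq_lintegral_mul _ my_gaussianPDF_meas
      (hJmeas.const_mul _)]
  simp only [Pi.mul_apply]
  -- push the constants into the inner integral and swap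
  have hpush : ∀ t : ℝ,
      gaussianPDF 0 1 t * (ENNReal.ofReal c * ∫⁻ w', myPhi n (S⁻¹ *ᵥ (w' - |t| • δ)) * F w')
        = ∫⁻ w', gaussianPDF 0 1 t * (ENNReal.ofReal c
            * (myPhi n (S⁻¹ *ᵥ (w' - |t| • δ)) * F w')) := by
    intro t
    rw [lintegral_const_mul' _ _ (by rw [gaussianPDF_def]; exact ENNReal.ofReal_ne_top),
      lintegral_const_mul' _ _ ENNReal.ofReal_ne_top]
  simp_rw [hpush]
  rw [lintegral_lintegral_swap]
  swap
  · apply Measurable.aemeasurable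
    apply Measurable.mul
    · exact my_gaussianPDF_meas.comp measurable_fst
    · exact measurable_const.mul hH
  -- inner t-integral
  have hfin : ∀ w' : Fin n → ℝ,
      (∫⁻ t, gaussianPDF 0 1 t *
          (ENNReal.ofReal c * (myPhi n (S⁻¹ *ᵥ (w' - |t| • δ)) * F w')))
        = ENNReal.ofReal (2 * mvNormalPDF 0 1 w' * stdNormalCDF (lam ⬝ᵥ w')) * F w' := by
    intro w'
    have hre : ∀ t : ℝ,
        gaussianPDF 0 1 t * (ENNReal.ofReal c * (myPhi n (S⁻¹ *ᵥ (w' - |t| • δ)) * F w'))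
          = (gaussianPDF 0 1 t * (ENNReal.ofReal c * myPhi n (S⁻¹ *ᵥ (w' - |t| • δ)))) * F w' := by
      intro t; ring
    simp_rw [hre]
    rw [lintegral_mul_const' _ _ (hFne w')]
    congr 1
    -- the key scalar computation
    have hq : ∀ t : ℝ, ((S⁻¹ *ᵥ (w' - |t| • δ)) ⬝ᵥ (S⁻¹ *ᵥ (w' - |t| • δ))) + t ^ 2
        = (c * |t| - lam ⬝ᵥ w') ^ 2 + w' ⬝ᵥ w' := by
      intro t
      have := hquad |t| w'
      rwa [sq_abs] at this
    have hmain := my_key_scalar n c (lam ⬝ᵥ w') (w' ⬝ᵥ w') hc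
      (fun t => (S⁻¹ *ᵥ (w' - |t| • δ)) ⬝ᵥ (S⁻¹ *ᵥ (w' - |t| • δ))) hq
    calc ∫⁻ t, gaussianPDF 0 1 t * (ENNReal.ofReal c * myPhi n (S⁻¹ *ᵥ (w' - |t| • δ)))
        = ∫⁻ t, ENNReal.ofReal ((Real.sqrt (2 * π))⁻¹ * Real.exp (-t ^ 2 / 2)) *
            (ENNReal.ofReal c *
              ENNReal.ofReal (((Real.sqrt (2 * π))⁻¹) ^ n *
                Real.exp (-((S⁻¹ *ᵥ (w' - |t| • δ)) ⬝ᵥ (S⁻¹ *ᵥ (w' - |t| • δ))) / 2))) := by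
          apply lintegral_congr
          intro t
          rw [my_gaussianPDF_eq, myPhi_eq]
      _ = ENNReal.ofReal (2 * ((2 * π) ^ (-(n : ℝ) / 2) * Real.exp (-(1/2) * (w' ⬝ᵥ w')))
            * stdNormalCDF (lam ⬝ᵥ w')) := hmain
      _ = ENNReal.ofReal (2 * mvNormalPDF 0 1 w' * stdNormalCDF (lam ⬝ᵥ w')) := by
          congr 2
          unfold mvNormalPDF
          rw [Matrix.det_one, inv_one, Matrix.one_mulVec, sub_zero, Real.one_rpow, mul_one]
  rw [lintegral_congr hfin]
  -- conclude
  rw [withDensity_apply _ hs, ← lintegral_indicator hs]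
  apply lintegral_congr
  intro w'
  by_cases h : w' ∈ s <;> simp [hF, Set.indicator_apply, h]
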